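/- Suppose the pair (A, C) is detectable, ρ(A) > 0, and ρ(A) < (λ_m + λ_2)/(λ_m − λ_2). Let W = I_m − αL with α a real number satisfying α > 0 and λ_2^{-1}(1 − ρ(A)^{-1}) < α < λ_m^{-1}(1 + ρ(A)^{-1}). Then the pair (W ⊗ A, C̄) is detectable: for every complex λ with |λ| ≥ 1 and every nonzero v ∈ ℂ^{mn} with (W ⊗ A)v = λv, one has C̄v ≠ 0. -/

import Mathlib

open Matrix Kronecker Polynomial


lemma charpoly_eval_eig {k : ℕ} (M : Matrix (Fin k) (Fin k) ℝ) (t : ℝ)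
    (x : Fin k → ℝ) (hx : x ≠ 0) (hMx : M *ᵥ x = t • x) :
    M.charpoly.eval t = 0 := by
  have hdet : (Matrix.scalar (Fin k) t - M).det = 0 := by
    rw [← Matrix.exists_mulVec_eq_zero_iff]
    refine ⟨x, hx, ?_⟩
    funext i
    simp [Matrix.sub_mulVec, Matrix.scalar_apply, Matrix.mulVec_diagonal, hMx]
  rw [Matrix.charpoly, _root_.eval_det, Matrix.matPolyEquiv_charmatrix]
  rw [Polynomial.eval_sub, Polynomial.eval_X, Polynomial.eval_C]
  exact hdet

lemma kron_mulVec {m n : ℕ} (P : Matrix (Fin m) (Fin m) ℂ) (Q : Matrix (Fin n) (Fin n) ℂ)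
    (x : Fin m × Fin n → ℂ) (i : Fin m) (j : Fin n) :
    ((P ⊗ₖ Q) *ᵥ x) (i, j) = ∑ k, P i k * ∑ l, Q j l * x (k, l) := by
  simp only [Matrix.mulVec, dotProduct, Fintype.sum_prod_type,
    Matrix.kroneckerMap_apply, Finset.mul_sum]
  exact Finset.sum_congr rfl fun k _ => Finset.sum_congr rfl fun l _ => by ring

lemma cmap_mul {a b c : Type*} [Fintype b] [DecidableEq b] (M : Matrix a b ℝ) (N : Matrix b c ℝ) :
    (M * N).map Complex.ofReal = M.map Complex.ofReal * N.map Complex.ofReal := by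
  ext i j
  simp [Matrix.mul_apply, Matrix.map_apply]

lemma cmap_one {a : Type*} [Fintype a] [DecidableEq a] :
    (1 : Matrix a a ℝ).map Complex.ofReal = 1 := by
  ext i j
  simp [Matrix.one_apply, Matrix.map_apply, apply_ite]

lemma cmap_kron {m n : ℕ} (W : Matrix (Fin m) (Fin m) ℝ) (A : Matrix (Fin n) (Fin n) ℝ) :
    (W ⊗ₖ A).map Complex.ofReal = (W.map Complex.ofReal) ⊗ₖ (A.map Complex.ofReal) := by
  ext ⟨i, j⟩ ⟨k, l⟩
  simp [Matrix.map_apply, Matrix.kroneckerMap_apply]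

/-- The block-diagonal matrix C̄ whose i-th diagonal block is `C i`
(equivalently, whose i-th block row is eᵢᵀ ⊗ Cᵢ), complexified. -/
def Cbar {m n : ℕ} (r : Fin m → ℕ) (C : ∀ i : Fin m, Matrix (Fin (r i)) (Fin n) ℝ) :
    Matrix (Σ i : Fin m, Fin (r i)) (Fin m × Fin n) ℂ :=
  fun q p => if q.1 = p.1 then ((C q.1).map Complex.ofReal) q.2 p.2 else 0

/-- With L the Laplacian of a connected graph on m > 2 vertices,
eigenvalues 0 = λ₁ < λ₂ ≤ ⋯ ≤ λₘ, (A, C) detectable, 0 < ρ(A) < (λₘ + λ₂)/(λₘ − λ₂),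
and W = I − αL with α > 0 and λ₂⁻¹(1 − ρ(A)⁻¹) < α < λₘ⁻¹(1 + ρ(A)⁻¹), the pair
(W ⊗ A, C̄) is detectable. -/
theorem stmt2 (m n : ℕ) (hm : 2 < m)
    (G : SimpleGraph (Fin m)) [DecidableRel G.Adj]
    (L : Matrix (Fin m) (Fin m) ℝ) (hL : L = G.lapMatrix ℝ)
    (hconn : G.Connected)
    (eig : Fin m → ℝ) (heig_mono : Monotone eig)
    (hchar : L.charpoly = ∏ i, (X - Polynomial.C (eig i)))
    (heig0 : eig ⟨0, by omega⟩ = 0) (heig1 : 0 < eig ⟨1, by omega⟩)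
    (A : Matrix (Fin n) (Fin n) ℝ)
    (r : Fin m → ℕ) (Cm : ∀ i : Fin m, Matrix (Fin (r i)) (Fin n) ℝ)
    -- (A, C) is detectable
    (hdet : ∀ lam : ℂ, 1 ≤ ‖lam‖ → ∀ v : Fin n → ℂ, v ≠ 0 →
      (A.map Complex.ofReal).mulVec v = lam • v →
        ∃ i, ((Cm i).map Complex.ofReal).mulVec v ≠ 0)
    -- ρA is the spectral radius of A
    (ρA : ℝ) (hρ_pos : 0 < ρA)
    (hρ_ub : ∀ μ : ℂ, (∃ v : Fin n → ℂ, v ≠ 0 ∧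
        (A.map Complex.ofReal).mulVec v = μ • v) → ‖μ‖ ≤ ρA)
    (hρ_mem : ∃ μ : ℂ, (∃ v : Fin n → ℂ, v ≠ 0 ∧
        (A.map Complex.ofReal).mulVec v = μ • v) ∧ ‖μ‖ = ρA)
    (hspec : ρA < (eig ⟨m - 1, by omega⟩ + eig ⟨1, by omega⟩) /
        (eig ⟨m - 1, by omega⟩ - eig ⟨1, by omega⟩))
    (α : ℝ) (hα_pos : 0 < α)
    (hα_lo : (eig ⟨1, by omega⟩)⁻¹ * (1 - ρA⁻¹) < α)
    (hα_hi : α < (eig ⟨m - 1, by omega⟩)⁻¹ * (1 + ρA⁻¹))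
    (W : Matrix (Fin m) (Fin m) ℝ) (hW : W = 1 - α • L) :
    ∀ lam : ℂ, 1 ≤ ‖lam‖ → ∀ v : Fin m × Fin n → ℂ, v ≠ 0 →
      ((W ⊗ₖ A).map Complex.ofReal).mulVec v = lam • v →
        (Cbar r Cm).mulVec v ≠ 0 := by
  intro lam hlam v hv hvEq
  have hαne : α ≠ 0 := ne_of_gt hα_pos
  have hlam0 : lam ≠ 0 := by
    intro h
    rw [h, norm_zero] at hlam
    linarith
  -- abbreviations
  set e1 : ℝ := eig ⟨1, by omega⟩ with he1
  set em : ℝ := eig ⟨m - 1, by omega⟩ with hem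
  have hem_pos : 0 < em := lt_of_lt_of_le heig1 (heig_mono (by
    simp [Fin.le_def]; omega))
  -- Hermitian
  have hWh : W.IsHermitian := by
    rw [hW, hL, Matrix.IsHermitian, Matrix.conjTranspose_eq_transpose_of_trivial]
    exact Matrix.isSymm_one.sub ((SimpleGraph.isSymm_lapMatrix ℝ G).smul α)
  set d : Fin m → ℝ := hWh.eigenvalues with hd_def
  set U₀ : Matrix (Fin m) (Fin m) ℝ := (hWh.eigenvectorUnitary : Matrix (Fin m) (Fin m) ℝ)
    with hU₀
  have hspec₀ : W = U₀ * Matrix.diagonal d * star U₀ := by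
    have := hWh.spectral_theorem
    rwa [RCLike.ofReal_real_eq_id, Function.id_comp] at this
  have hU1 : U₀ * star U₀ = 1 := Matrix.mem_unitaryGroup_iff.mp hWh.eigenvectorUnitary.2
  have hU2 : star U₀ * U₀ = 1 := Matrix.mem_unitaryGroup_iff'.mp hWh.eigenvectorUnitary.2
  -- eigenvector columns
  set u : Fin m → Fin m → ℝ := fun i p => U₀ p i with hu_def
  have hu_eq : ∀ i, u i = ⇑(hWh.eigenvectorBasis i) := by
    intro i
    funext p
    exact hWh.eigenvectorUnitary_apply p i
  have hWu : ∀ i, W *ᵥ u i = d i • u i := by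
    intro i
    rw [hu_eq i]
    exact hWh.mulVec_eigenvectorBasis i
  have hu0 : ∀ i, u i ≠ 0 := by
    intro i h
    have h1 := congrFun (congrFun hU2 i) i
    simp only [Matrix.mul_apply, Matrix.star_apply, star_trivial, Matrix.one_apply_eq] at h1
    have : ∀ p, U₀ p i = 0 := fun p => congrFun h p
    simp [this] at h1
  have hLu : ∀ i, L *ᵥ u i = ((1 - d i) / α) • u i := by
    intro i
    funext p
    have h := congrFun (hWu i) p
    rw [hW, Matrix.sub_mulVec, Matrix.one_mulVec, Matrix.smul_mulVec] at h
    simp only [Pi.sub_apply, Pi.smul_apply, smul_eq_mul] at h ⊢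
    field_simp
    linarith
  -- each d i = 1 - α * eig k
  have hdk : ∀ i, ∃ k : Fin m, (1 - d i) / α = eig k := by
    intro i
    have h0 := charpoly_eval_eig L ((1 - d i) / α) (u i) (hu0 i) (hLu i)
    rw [hchar, Polynomial.eval_prod] at h0
    obtain ⟨k, -, hk⟩ := Finset.prod_eq_zero_iff.mp h0
    refine ⟨k, ?_⟩
    simp only [Polynomial.eval_sub, Polynomial.eval_X, Polynomial.eval_C] at hk
    linarith [sub_eq_zero.mp hk]
  -- complexified matrices
  set Wc : Matrix (Fin m) (Fin m) ℂ := W.map Complex.ofReal with hWc_def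
  set Ac : Matrix (Fin n) (Fin n) ℂ := A.map Complex.ofReal with hAc_def
  set Uc : Matrix (Fin m) (Fin m) ℂ := U₀.map Complex.ofReal with hUc_def
  set Sc : Matrix (Fin m) (Fin m) ℂ := (star U₀).map Complex.ofReal with hSc_def
  set Dc : Matrix (Fin m) (Fin m) ℂ := Matrix.diagonal (fun i => (d i : ℂ)) with hDc_def
  have hDmap : (Matrix.diagonal d).map Complex.ofReal = Dc := by
    rw [Matrix.diagonal_map Complex.ofReal_zero]
  have hWcspec : Wc = Uc * Dc * Sc := by
    rw [hWc_def, hspec₀, cmap_mul, cmap_mul, hDmap]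
  have hUSc : Uc * Sc = 1 := by rw [hUc_def, hSc_def, ← cmap_mul, hU1, cmap_one]
  have hSUc : Sc * Uc = 1 := by rw [hUc_def, hSc_def, ← cmap_mul, hU2, cmap_one]
  have hvEq' : (Wc ⊗ₖ Ac) *ᵥ v = lam • v := by
    rw [hWc_def, hAc_def, ← cmap_kron]
    exact hvEq
  -- transformed vector
  set w : Fin m × Fin n → ℂ := (Sc ⊗ₖ (1 : Matrix (Fin n) (Fin n) ℂ)) *ᵥ v with hw_def
  have hKinv : (Uc ⊗ₖ (1 : Matrix (Fin n) (Fin n) ℂ)) * (Sc ⊗ₖ 1) = 1 := by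
    rw [← Matrix.mul_kronecker_mul, hUSc, one_mul, Matrix.one_kronecker_one]
  have hv' : v = (Uc ⊗ₖ (1 : Matrix (Fin n) (Fin n) ℂ)) *ᵥ w := by
    rw [hw_def, Matrix.mulVec_mulVec, hKinv, Matrix.one_mulVec]
  have hwEq : (Dc ⊗ₖ Ac) *ᵥ w = lam • w := by
    have h1 : (Dc ⊗ₖ Ac) * (Sc ⊗ₖ (1 : Matrix (Fin n) (Fin n) ℂ))
        = (Sc ⊗ₖ (1 : Matrix (Fin n) (Fin n) ℂ)) * (Wc ⊗ₖ Ac) := by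
      rw [← Matrix.mul_kronecker_mul, ← Matrix.mul_kronecker_mul, mul_one, one_mul, hWcspec]
      congr 1
      rw [← mul_assoc, ← mul_assoc, hSUc, one_mul]
    calc (Dc ⊗ₖ Ac) *ᵥ w = ((Dc ⊗ₖ Ac) * (Sc ⊗ₖ (1 : Matrix (Fin n) (Fin n) ℂ))) *ᵥ v := by
          rw [hw_def, Matrix.mulVec_mulVec]
      _ = (Sc ⊗ₖ (1 : Matrix (Fin n) (Fin n) ℂ)) *ᵥ ((Wc ⊗ₖ Ac) *ᵥ v) := by
          rw [h1, Matrix.mulVec_mulVec]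
      _ = lam • w := by rw [hvEq', Matrix.mulVec_smul, hw_def]
  have hw0 : w ≠ 0 := by
    intro h
    apply hv
    rw [hv', h, Matrix.mulVec_zero]
  -- block equation
  have hblock : ∀ i j, (d i : ℂ) * (∑ l, Ac j l * w (i, l)) = lam * w (i, j) := by
    intro i j
    have h := congrFun hwEq (i, j)
    rw [kron_mulVec] at h
    rw [Finset.sum_eq_single i (fun k _ hk => by
      rw [hDc_def, Matrix.diagonal_apply_ne _ (Ne.symm hk), zero_mul])
      (fun h => absurd (Finset.mem_univ i) h)] at h
    rw [hDc_def, Matrix.diagonal_apply_eq] at h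
    rw [h]
    simp
  -- the main claim: nonzero blocks only for constant eigenvectors
  have claim : ∀ i : Fin m, (fun l => w (i, l)) ≠ 0 → ∀ p q : Fin m, U₀ p i = U₀ q i := by
    intro i hwi
    obtain ⟨k, hk⟩ := hdk i
    by_cases hk0 : k = (⟨0, by omega⟩ : Fin m)
    · -- eigenvalue 0 : constant eigenvector
      have heigk : eig k = 0 := by rw [hk0, heig0]
      have hdi : d i = 1 := by
        rw [heigk] at hk
        field_simp at hk
        linarith
      have hL0 : (G.lapMatrix ℝ) *ᵥ u i = 0 := by
        rw [← hL, hLu i, hdi]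
        simp
      have hreach := (SimpleGraph.lapMatrix_mulVec_eq_zero_iff_forall_reachable
        G).mp hL0
      intro p q
      exact hreach p q (hconn.preconnected p q)
    · -- other eigenvalues: contradiction
      exfalso
      have hk1 : (1 : ℕ) ≤ k.val := by
        rcases Nat.eq_zero_or_pos k.val with h0 | h1
        · exact absurd (Fin.ext h0) hk0
        · exact h1
      have he1le : e1 ≤ eig k := heig_mono (by simp [Fin.le_def]; omega)
      have hlem : eig k ≤ em := heig_mono (by simp [Fin.le_def]; omega)
      have hdi : d i = 1 - α * eig k := by
        field_simp at hk
        linarith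
      -- |d i| < ρA⁻¹
      have hbound1 : d i < ρA⁻¹ := by
        have h := mul_lt_mul_of_pos_left hα_lo heig1
        rw [← mul_assoc, mul_inv_cancel₀ (ne_of_gt heig1), one_mul] at h
        nlinarith
      have hbound2 : -ρA⁻¹ < d i := by
        have h := mul_lt_mul_of_pos_left hα_hi hem_pos
        rw [← mul_assoc, mul_inv_cancel₀ (ne_of_gt hem_pos), one_mul] at h
        nlinarith
      by_cases hdz : d i = 0
      · apply hwi
        funext l
        have h := hblock i l
        rw [hdz] at h
        simpa [eq_comm, hlam0] using h.symm
      · have hAx : Ac *ᵥ (fun l => w (i, l)) = (lam / (d i : ℂ)) • (fun l => w (i, l)) := by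
          funext j
          have h := hblock i j
          have hdc : ((d i : ℝ) : ℂ) ≠ 0 := Complex.ofReal_ne_zero.mpr hdz
          simp only [Matrix.mulVec, dotProduct, Pi.smul_apply, smul_eq_mul]
          rw [div_mul_eq_mul_div, eq_div_iff hdc]
          linear_combination h
        have hb := hρ_ub (lam / (d i : ℂ)) ⟨_, hwi, hAx⟩
        rw [norm_div, Complex.norm_real, Real.norm_eq_abs, div_le_iff₀ (abs_pos.mpr hdz)] at hb
        have habs : |d i| < ρA⁻¹ := abs_lt.mpr ⟨hbound2, hbound1⟩
        have : ‖lam‖ < 1 := by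
          calc ‖lam‖ ≤ ρA * |d i| := hb
            _ < ρA * ρA⁻¹ := by exact mul_lt_mul_of_pos_left habs hρ_pos
            _ = 1 := mul_inv_cancel₀ (ne_of_gt hρ_pos)
        linarith
  -- rows of v are equal
  set p0 : Fin m := ⟨0, by omega⟩ with hp0
  have hventry : ∀ p j, v (p, j) = ∑ k, (U₀ p k : ℂ) * w (k, j) := by
    intro p j
    conv_lhs => rw [hv']
    rw [kron_mulVec]
    refine Finset.sum_congr rfl fun k _ => ?_
    congr 1
    simp [Matrix.one_apply, ite_mul]
  have hrow : ∀ p j, v (p, j) = v (p0, j) := by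
    intro p j
    rw [hventry p j, hventry p0 j]
    refine Finset.sum_congr rfl fun k _ => ?_
    by_cases hk : (fun l => w (k, l)) = 0
    · have : w (k, j) = 0 := congrFun hk j
      rw [this, mul_zero, mul_zero]
    · rw [claim k hk p p0]
  set x : Fin n → ℂ := fun j => v (p0, j) with hx_def
  have hx0 : x ≠ 0 := by
    intro h
    apply hv
    funext pj
    have := hrow pj.1 pj.2
    rw [show v pj = v (pj.1, pj.2) from rfl, this]
    exact congrFun h pj.2
  -- row sums of W equal 1
  have hrowsum : ∀ p, ∑ q, W p q = 1 := by
    intro p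
    have hLsum : ∑ q, L p q = 0 := by
      have h := congrFun (SimpleGraph.lapMatrix_mulVec_const_eq_zero (R := ℝ) G) p
      simpa [Matrix.mulVec, dotProduct, hL] using h
    rw [hW]
    simp only [Matrix.sub_apply, Matrix.smul_apply, smul_eq_mul, Finset.sum_sub_distrib,
      ← Finset.mul_sum, hLsum, mul_zero, sub_zero]
    simp [Matrix.one_apply]
  -- eigen equation for x
  have hAx : Ac *ᵥ x = lam • x := by
    funext j
    have h := congrFun hvEq' (p0, j)
    rw [kron_mulVec] at h
    have hconst : ∀ k, (∑ l, Ac j l * v (k, l)) = ∑ l, Ac j l * x l := by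
      intro k
      refine Finset.sum_congr rfl fun l _ => ?_
      rw [hrow k l]
    simp_rw [hconst] at h
    rw [← Finset.sum_mul] at h
    have hsum1 : (∑ k, Wc p0 k) = 1 := by
      rw [hWc_def]
      simp only [Matrix.map_apply]
      rw [← Complex.ofReal_sum, hrowsum p0, Complex.ofReal_one]
    rw [hsum1, one_mul] at h
    simp only [Matrix.mulVec, dotProduct]
    rw [h]
    simp [hx_def]
  -- detectability
  obtain ⟨i, hCx⟩ := hdet lam hlam x hx0 hAx
  obtain ⟨q, hq⟩ := Function.ne_iff.mp hCx
  intro hC0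
  apply hq
  have hcv := congrFun hC0 ⟨i, q⟩
  rw [show ((Cbar r Cm) *ᵥ v) ⟨i, q⟩ = ((Cm i).map Complex.ofReal *ᵥ x) q from ?_] at hcv
  · exact hcv
  · simp only [Matrix.mulVec, dotProduct, Fintype.sum_prod_type, Cbar]
    rw [Finset.sum_eq_single i (fun p _ hp => Finset.sum_eq_zero fun j _ => by
      rw [if_neg (Ne.symm hp), zero_mul]) (fun h => absurd (Finset.mem_univ i) h)]
    refine Finset.sum_congr rfl fun j _ => ?_
    rw [if_pos rfl, hrow i j]
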